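/- The function K̂_ℓ(z,w) = (1/((ℓ+d-1)·(ℓ-1)!))·⟨z,w⟩^{ℓ-1}·(((ℓ+d-1)/ℓ)·⟨z,w⟩ I_d − z w̄ᵀ) is the reproducing kernel of the subspace V̂_ℓ = {f ∈ ℂ^d ⊗ P_ℓ : Σᵢ ∂ᵢfᵢ = 0} of the Fischer-Fock space: K̂_ℓ(·,w)ζ ∈ V̂_ℓ for all w, ζ ∈ ℂ^d, and ⟨f, K̂_ℓ(·,w)ζ⟩_{F_ℓ} = ⟨f(w), ζ⟩ for all f ∈ V̂_ℓ. -/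

import Mathlib

open MvPolynomial
open scoped ComplexConjugate

/-- The Fischer-Fock inner product on polynomials in `d` complex variables, determined by
`⟨z^α, z^β⟩_F = α! δ_{α,β}`. -/
noncomputable def fock (d : ℕ) (p q : MvPolynomial (Fin d) ℂ) : ℂ :=
  ∑ α ∈ p.support ∪ q.support,
    ((∏ i, (α i).factorial : ℕ) : ℂ) * p.coeff α * conj (q.coeff α)

namespace Stmt10Aux

variable {d : ℕ}

noncomputable def Nc (α : Fin d →₀ ℕ) : ℂ := ((∏ i, (α i).factorial : ℕ) : ℂ)

lemma fock_eq_sum (p q : MvPolynomial (Fin d) ℂ) {T : Finset (Fin d →₀ ℕ)}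
    (hT : p.support ∪ q.support ⊆ T) :
    fock d p q = ∑ α ∈ T, Nc α * p.coeff α * conj (q.coeff α) := by
  unfold fock Nc
  refine Finset.sum_subset hT fun α _ hα => ?_
  rw [Finset.mem_union, not_or] at hα
  rw [notMem_support_iff.mp hα.1]
  ring

lemma fock_eq_sum_right (p q : MvPolynomial (Fin d) ℂ) :
    fock d p q = ∑ α ∈ q.support, Nc α * p.coeff α * conj (q.coeff α) := by
  unfold fock Nc
  refine (Finset.sum_subset Finset.subset_union_right fun α _ hα => ?_).symm
  rw [notMem_support_iff.mp hα]
  simp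

lemma fock_zero_right (p : MvPolynomial (Fin d) ℂ) : fock d p 0 = 0 := by
  simp [fock]

lemma fock_add_right (p q r : MvPolynomial (Fin d) ℂ) :
    fock d p (q + r) = fock d p q + fock d p r := by
  classical
  set T := p.support ∪ q.support ∪ r.support ∪ (q + r).support with hT
  have h1 : p.support ∪ (q + r).support ⊆ T := by
    intro x hx; simp only [hT, Finset.mem_union] at hx ⊢; tauto
  have h2 : p.support ∪ q.support ⊆ T := by
    intro x hx; simp only [hT, Finset.mem_union] at hx ⊢; tauto
  have h3 : p.support ∪ r.support ⊆ T := by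
    intro x hx; simp only [hT, Finset.mem_union] at hx ⊢; tauto
  rw [fock_eq_sum p (q + r) h1, fock_eq_sum p q h2, fock_eq_sum p r h3,
    ← Finset.sum_add_distrib]
  refine Finset.sum_congr rfl fun α _ => ?_
  rw [coeff_add, map_add]
  ring

lemma fock_sub_right (p q r : MvPolynomial (Fin d) ℂ) :
    fock d p (q - r) = fock d p q - fock d p r := by
  classical
  set T := p.support ∪ q.support ∪ r.support ∪ (q - r).support with hT
  have h1 : p.support ∪ (q - r).support ⊆ T := by
    intro x hx; simp only [hT, Finset.mem_union] at hx ⊢; tauto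
  have h2 : p.support ∪ q.support ⊆ T := by
    intro x hx; simp only [hT, Finset.mem_union] at hx ⊢; tauto
  have h3 : p.support ∪ r.support ⊆ T := by
    intro x hx; simp only [hT, Finset.mem_union] at hx ⊢; tauto
  rw [fock_eq_sum p (q - r) h1, fock_eq_sum p q h2, fock_eq_sum p r h3,
    ← Finset.sum_sub_distrib]
  refine Finset.sum_congr rfl fun α _ => ?_
  rw [coeff_sub, map_sub]
  ring

lemma fock_sum_right {ι : Type*} (p : MvPolynomial (Fin d) ℂ) (s : Finset ι)
    (g : ι → MvPolynomial (Fin d) ℂ) :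
    fock d p (∑ i ∈ s, g i) = ∑ i ∈ s, fock d p (g i) := by
  classical
  induction s using Finset.induction_on with
  | empty => simp [fock_zero_right]
  | @insert a s h ih => rw [Finset.sum_insert h, Finset.sum_insert h, fock_add_right, ih]

lemma fock_C_mul_right (p q : MvPolynomial (Fin d) ℂ) (a : ℂ) :
    fock d p (C a * q) = conj a * fock d p q := by
  classical
  set T := p.support ∪ q.support ∪ (C a * q).support with hT
  have h1 : p.support ∪ (C a * q).support ⊆ T := by
    intro x hx; simp only [hT, Finset.mem_union] at hx ⊢; tauto
  have h2 : p.support ∪ q.support ⊆ T := by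
    intro x hx; simp only [hT, Finset.mem_union] at hx ⊢; tauto
  rw [fock_eq_sum p (C a * q) h1, fock_eq_sum p q h2, Finset.mul_sum]
  refine Finset.sum_congr rfl fun α _ => ?_
  rw [coeff_C_mul, map_mul]
  ring

lemma coeff_pderiv (j : Fin d) (p : MvPolynomial (Fin d) ℂ) (β : Fin d →₀ ℕ) :
    (pderiv j p).coeff β = ((β j + 1 : ℕ) : ℂ) * p.coeff (β + Finsupp.single j 1) := by
  classical
  induction p using MvPolynomial.induction_on' with
  | monomial s a =>
    rw [pderiv_monomial, coeff_monomial, coeff_monomial]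
    by_cases h : s = β + Finsupp.single j 1
    · subst h
      rw [if_pos (by rw [add_tsub_cancel_right]), if_pos rfl]
      simp only [Finsupp.add_apply, Finsupp.single_eq_same]
      push_cast
      ring
    · rw [if_neg h, mul_zero]
      split_ifs with h2
      · rcases Nat.eq_zero_or_pos (s j) with h0 | h0
        · rw [h0]; simp
        · exact absurd (by
            rw [← h2, tsub_add_cancel_of_le (Finsupp.single_le_iff.mpr h0)]) h
      · rfl
  | add p q hp hq =>
    rw [map_add, coeff_add, coeff_add, hp, hq]
    ring

lemma Nc_add_single (β : Fin d →₀ ℕ) (j : Fin d) :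
    Nc (β + Finsupp.single j 1) = ((β j + 1 : ℕ) : ℂ) * Nc β := by
  unfold Nc
  rw [← Nat.cast_mul]
  congr 1
  rw [← Finset.prod_erase_mul _ _ (Finset.mem_univ j),
    ← Finset.prod_erase_mul _ _ (Finset.mem_univ j)]
  have h1 : ∀ i ∈ Finset.univ.erase j,
      (((β + Finsupp.single j 1) : Fin d →₀ ℕ) i).factorial = (β i).factorial := fun i hi => by
    rw [Finsupp.add_apply, Finsupp.single_apply,
      if_neg (Ne.symm (Finset.mem_erase.mp hi).1), add_zero]
  rw [Finset.prod_congr rfl h1, Finsupp.add_apply, Finsupp.single_eq_same,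
    Nat.factorial_succ]
  ring

lemma fock_X_mul_right (p q : MvPolynomial (Fin d) ℂ) (j : Fin d) :
    fock d p (X j * q) = fock d (pderiv j p) q := by
  rw [fock_eq_sum_right p (X j * q), fock_eq_sum_right (pderiv j p) q,
    support_X_mul, Finset.sum_map]
  refine Finset.sum_congr rfl fun β hβ => ?_
  simp only [addLeftEmbedding_apply]
  rw [coeff_X_mul, coeff_pderiv, add_comm (Finsupp.single j 1) β, Nc_add_single]
  ring

lemma isHomogeneous_pderiv {n : ℕ} {p : MvPolynomial (Fin d) ℂ} (j : Fin d)
    (hp : p.IsHomogeneous (n + 1)) : (pderiv j p).IsHomogeneous n := by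
  intro β hβ
  rw [coeff_pderiv] at hβ
  have h2 : p.coeff (β + Finsupp.single j 1) ≠ 0 := fun h => hβ (by rw [h, mul_zero])
  have h3 := hp h2
  rw [map_add] at h3
  have h4 : (Finsupp.weight 1) (Finsupp.single j 1) = 1 := by
    simp [Finsupp.weight_apply, Finsupp.sum_single_index]
  rw [h4] at h3
  omega

lemma euler (n : ℕ) (p : MvPolynomial (Fin d) ℂ) (hp : p.IsHomogeneous n) :
    ∑ j, X j * pderiv j p = C (n : ℂ) * p := by
  classical
  apply MvPolynomial.ext
  intro β
  rw [coeff_sum, coeff_C_mul]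
  have hterm : ∀ j, coeff β (X j * pderiv j p) = ((β j : ℕ) : ℂ) * coeff β p := by
    intro j
    rw [coeff_X_mul']
    split_ifs with h
    · rw [coeff_pderiv]
      have hβj : 1 ≤ β j := Nat.one_le_iff_ne_zero.mpr (Finsupp.mem_support_iff.mp h)
      rw [tsub_add_cancel_of_le (Finsupp.single_le_iff.mpr hβj)]
      congr 2
      rw [Finsupp.tsub_apply, Finsupp.single_eq_same]
      omega
    · have hβj : β j = 0 := by
        by_contra hne
        exact h (Finsupp.mem_support_iff.mpr hne)
      rw [hβj]
      simp
  rw [Finset.sum_congr rfl fun j _ => hterm j, ← Finset.sum_mul]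
  by_cases hcoeff : coeff β p = 0
  · rw [hcoeff, mul_zero, mul_zero]
  · have hdeg : ∑ j, β j = n := by
      have h1 : Finsupp.degree β = n := by
        rw [Finsupp.degree_eq_weight_one]; exact hp hcoeff
      rw [Finsupp.degree] at h1
      rw [← h1]
      exact (Finset.sum_subset (Finset.subset_univ _)
        (fun x _ hx => Finsupp.notMem_support_iff.mp hx)).symm
    congr 1
    rw [← Nat.cast_sum, hdeg]

lemma fock_one_right (p : MvPolynomial (Fin d) ℂ) : fock d p 1 = p.coeff 0 := by
  rw [fock_eq_sum_right p 1]
  have hs : (1 : MvPolynomial (Fin d) ℂ).support = {0} := by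
    rw [← C_1]
    classical
    rw [show (C 1 : MvPolynomial (Fin d) ℂ) = monomial 0 1 from rfl, support_monomial]
    simp
  rw [hs, Finset.sum_singleton]
  simp [Nc]

lemma eval_of_isHomogeneous_zero (w : Fin d → ℂ) (p : MvPolynomial (Fin d) ℂ)
    (hp : p.IsHomogeneous 0) : eval w p = p.coeff 0 := by
  have hsub : p.support ⊆ {0} := by
    intro β hβ
    have h1 : Finsupp.degree β = 0 := by
      rw [Finsupp.degree_eq_weight_one]; exact hp (mem_support_iff.mp hβ)
    rw [Finset.mem_singleton, ← Finsupp.degree_eq_zero_iff]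
    exact h1
  rw [eval_eq, Finset.sum_subset hsub
    (fun β _ hβ => by rw [notMem_support_iff.mp hβ, zero_mul])]
  simp

lemma fock_S_pow (w : Fin d → ℂ) (n : ℕ) (p : MvPolynomial (Fin d) ℂ)
    (hp : p.IsHomogeneous n) :
    fock d p ((∑ k, C (conj (w k)) * X k) ^ n) = (n.factorial : ℂ) * eval w p := by
  induction n generalizing p with
  | zero =>
    rw [pow_zero, fock_one_right, eval_of_isHomogeneous_zero w p hp]
    simp
  | succ n ih =>
    set S : MvPolynomial (Fin d) ℂ := ∑ k, C (conj (w k)) * X k with hS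
    have hexp : S ^ (n + 1) = ∑ k, C (conj (w k)) * (X k * S ^ n) := by
      rw [pow_succ]
      nth_rewrite 2 [hS]
      rw [Finset.mul_sum]
      exact Finset.sum_congr rfl fun k _ => by ring
    rw [hexp, fock_sum_right]
    have hterm : ∀ k, fock d p (C (conj (w k)) * (X k * S ^ n)) =
        w k * ((n.factorial : ℂ) * eval w (pderiv k p)) := by
      intro k
      rw [fock_C_mul_right, fock_X_mul_right, ih _ (isHomogeneous_pderiv k hp),
        Complex.conj_conj]
    rw [Finset.sum_congr rfl fun k _ => hterm k]
    have heuler := congrArg (eval w) (euler (n + 1) p hp)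
    simp only [map_sum, map_mul, eval_X, eval_C] at heuler
    calc ∑ k, w k * ((n.factorial : ℂ) * eval w (pderiv k p))
        = (n.factorial : ℂ) * ∑ k, w k * eval w (pderiv k p) := by
          rw [Finset.mul_sum]; exact Finset.sum_congr rfl fun k _ => by ring
      _ = (n.factorial : ℂ) * (((n + 1 : ℕ) : ℂ) * eval w p) := by rw [heuler]
      _ = ((n + 1).factorial : ℂ) * eval w p := by
          rw [Nat.factorial_succ]; push_cast; ring

end Stmt10Aux

/-- `K̂_ℓ(z,w) = (1/((ℓ+d-1)(ℓ-1)!)) ⟨z,w⟩^{ℓ-1} (((ℓ+d-1)/ℓ)⟨z,w⟩ I_d − z w̄ᵀ)`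
(here `ℓ = m+1`) is the reproducing kernel of `V̂_ℓ = {f ∈ ℂ^d ⊗ P_ℓ : Σᵢ ∂ᵢ fᵢ = 0}`:
each `K̂_ℓ(·,w)ζ` lies in `V̂_ℓ`, and `⟨f, K̂_ℓ(·,w)ζ⟩ = ⟨f(w), ζ⟩` for all `f ∈ V̂_ℓ`. -/
theorem stmt10 (d m : ℕ) (w ζ : Fin d → ℂ) :
    let S : MvPolynomial (Fin d) ℂ := ∑ k, C (conj (w k)) * X k
    let coef : ℂ := 1 / (((m + d : ℕ) : ℂ) * (m.factorial : ℂ))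
    let ratio : ℂ := ((m + d : ℕ) : ℂ) / ((m + 1 : ℕ) : ℂ)
    let comp : Fin d → MvPolynomial (Fin d) ℂ := fun j =>
      C coef * S ^ m * (C ratio * S * C (ζ j) - X j * C (∑ i, conj (w i) * ζ i))
    (∀ j, (comp j).IsHomogeneous (m + 1)) ∧
    (∑ j, (pderiv j (comp j) : MvPolynomial (Fin d) ℂ)) = 0 ∧
    ∀ f : Fin d → MvPolynomial (Fin d) ℂ, (∀ j, (f j).IsHomogeneous (m + 1)) →
      (∑ j, (pderiv j (f j) : MvPolynomial (Fin d) ℂ)) = 0 →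
      (∑ j, fock d (f j) (comp j)) = ∑ j, eval w (f j) * conj (ζ j) := by
  classical
  intro S coef ratio comp
  open Stmt10Aux in
  set c : ℂ := ∑ i, conj (w i) * ζ i with hc
  have hS : S = ∑ k, C (conj (w k)) * X k := rfl
  have hcoef : coef = 1 / (((m + d : ℕ) : ℂ) * (m.factorial : ℂ)) := rfl
  have hratio : ratio = ((m + d : ℕ) : ℂ) / ((m + 1 : ℕ) : ℂ) := rfl
  have hcomp : ∀ j, comp j =
      C coef * S ^ m * (C ratio * S * C (ζ j) - X j * C c) := fun _ => rfl
  have hS1 : S.IsHomogeneous 1 := by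
    rw [hS]
    exact IsHomogeneous.sum _ _ _ fun k _ => isHomogeneous_C_mul_X _ _
  have hSm : (S ^ m).IsHomogeneous m := by simpa using hS1.pow m
  have hpdS : ∀ j, pderiv j S = C (conj (w j)) := by
    intro j
    rw [hS, map_sum]
    rw [Finset.sum_eq_single j
      (fun k _ hk => by rw [pderiv_C_mul, pderiv_X_of_ne hk, mul_zero])
      (fun h => absurd (Finset.mem_univ j) h)]
    rw [pderiv_C_mul, pderiv_X_self, mul_one]
  refine ⟨?_, ?_, ?_⟩
  · -- homogeneity
    intro j
    rw [hcomp]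
    have h1 : (C coef * S ^ m : MvPolynomial (Fin d) ℂ).IsHomogeneous m := hSm.C_mul _
    have h2 : (C ratio * S * C (ζ j)).IsHomogeneous 1 := by
      simpa using ((isHomogeneous_C _ ratio).mul hS1).mul (isHomogeneous_C _ (ζ j))
    have h3 : (X j * C c : MvPolynomial (Fin d) ℂ).IsHomogeneous 1 := by
      simpa using (isHomogeneous_X ℂ j).mul (isHomogeneous_C _ c)
    have h4 : (C ratio * S * C (ζ j) - X j * C c).IsHomogeneous 1 :=
      (homogeneousSubmodule (Fin d) ℂ 1).sub_mem h2 h3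
    exact h1.mul h4
  · -- divergence free
    have hcalc : ∀ j, pderiv j (comp j) =
        C (coef * ratio * ζ j * conj (w j)) *
            ((m : MvPolynomial (Fin d) ℂ) * S ^ (m - 1) * S + S ^ m)
          - C (coef * c) *
            (((m : MvPolynomial (Fin d) ℂ) * S ^ (m - 1) * C (conj (w j))) * X j + S ^ m) := by
      intro j
      have hre : comp j = C (coef * ratio * ζ j) * (S ^ m * S)
          - C (coef * c) * (S ^ m * X j) := by
        rw [hcomp]; simp only [map_mul]; ring
      rw [hre, map_sub, pderiv_C_mul, pderiv_C_mul, pderiv_mul, pderiv_mul,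
        pderiv_pow, hpdS, pderiv_X_self, mul_one]
      simp only [map_mul]
      ring
    rw [Finset.sum_congr rfl fun j _ => hcalc j, Finset.sum_sub_distrib]
    have e1 : ∑ j, C (coef * ratio * ζ j * conj (w j)) *
        ((m : MvPolynomial (Fin d) ℂ) * S ^ (m - 1) * S + S ^ m)
        = C (coef * ratio * c) *
          ((m : MvPolynomial (Fin d) ℂ) * S ^ (m - 1) * S + S ^ m) := by
      rw [← Finset.sum_mul]
      congr 1
      rw [← map_sum]
      congr 1
      rw [hc, Finset.mul_sum]
      exact Finset.sum_congr rfl fun i _ => by ring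
    have e2 : ∑ j, C (coef * c) *
        (((m : MvPolynomial (Fin d) ℂ) * S ^ (m - 1) * C (conj (w j))) * X j + S ^ m)
        = C (coef * c) * ((m : MvPolynomial (Fin d) ℂ) * S ^ (m - 1) * S
            + (d : MvPolynomial (Fin d) ℂ) * S ^ m) := by
      rw [← Finset.mul_sum]
      congr 1
      rw [Finset.sum_add_distrib]
      congr 1
      · nth_rewrite 2 [hS]
        rw [Finset.mul_sum]
        exact Finset.sum_congr rfl fun j _ => by ring
      · rw [Finset.sum_const, Finset.card_univ, Fintype.card_fin, nsmul_eq_mul]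
    rw [e1, e2]
    have hT2 : (m : MvPolynomial (Fin d) ℂ) * S ^ (m - 1) * S
        = (m : MvPolynomial (Fin d) ℂ) * S ^ m := by
      cases m with
      | zero => simp
      | succ n => rw [Nat.succ_sub_one, pow_succ]; ring
    rw [hT2]
    have hsc : coef * ratio * c * ((m : ℂ) + 1) - coef * c * ((m : ℂ) + (d : ℂ)) = 0 := by
      have hm1 : ((m : ℂ) + 1) ≠ 0 := by
        have : ((m + 1 : ℕ) : ℂ) ≠ 0 := Nat.cast_ne_zero.mpr (Nat.succ_ne_zero m)
        push_cast at this
        exact this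
      rw [hratio]
      field_simp
      push_cast
      ring
    have hzero : C (coef * ratio * c) * ((m : MvPolynomial (Fin d) ℂ) * S ^ m + S ^ m)
        - C (coef * c) * ((m : MvPolynomial (Fin d) ℂ) * S ^ m
            + (d : MvPolynomial (Fin d) ℂ) * S ^ m)
        = C (coef * ratio * c * ((m : ℂ) + 1) - coef * c * ((m : ℂ) + (d : ℂ))) * S ^ m := by
      simp only [map_sub, map_mul, map_add, map_one, map_natCast]
      ring
    rw [hzero, hsc, map_zero, zero_mul]
  · -- reproducing property
    intro f hf hdiv
    rcases Nat.eq_zero_or_pos d with hd | hd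
    · subst hd
      simp
    · have key : conj (coef * ratio) * (((m + 1).factorial : ℕ) : ℂ) = 1 := by
        have h1 : ((m + d : ℕ) : ℂ) ≠ 0 := Nat.cast_ne_zero.mpr (by omega)
        have h2 : ((m.factorial : ℕ) : ℂ) ≠ 0 := Nat.cast_ne_zero.mpr m.factorial_ne_zero
        have h3 : ((m + 1 : ℕ) : ℂ) ≠ 0 := Nat.cast_ne_zero.mpr (Nat.succ_ne_zero m)
        have hfac : (((m + 1).factorial : ℕ) : ℂ)
            = ((m + 1 : ℕ) : ℂ) * ((m.factorial : ℕ) : ℂ) := by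
          rw [Nat.factorial_succ, Nat.cast_mul]
        rw [hcoef, hratio, hfac]
        simp only [map_mul, map_div₀, map_one, Complex.conj_natCast]
        generalize hA : ((m + d : ℕ) : ℂ) = A at h1 ⊢
        generalize hB : ((m.factorial : ℕ) : ℂ) = B at h2 ⊢
        generalize hC : ((m + 1 : ℕ) : ℂ) = Cq at h3 ⊢
        field_simp
      have hre : ∀ j, comp j = C (coef * ratio * ζ j) * S ^ (m + 1)
          - C (coef * c) * (X j * S ^ m) := by
        intro j
        rw [hcomp, pow_succ]; simp only [map_mul]; ring
      have hfj : ∀ j, fock d (f j) (comp j) =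
          conj (coef * ratio * ζ j) * (((m + 1).factorial : ℕ) : ℂ) * eval w (f j)
          - conj (coef * c) * ((m.factorial : ℕ) : ℂ) * eval w (pderiv j (f j)) := by
        intro j
        rw [hre, Stmt10Aux.fock_sub_right, Stmt10Aux.fock_C_mul_right,
          Stmt10Aux.fock_C_mul_right, Stmt10Aux.fock_X_mul_right, hS,
          Stmt10Aux.fock_S_pow w (m + 1) (f j) (hf j),
          Stmt10Aux.fock_S_pow w m (pderiv j (f j))
            (Stmt10Aux.isHomogeneous_pderiv j (hf j))]
        ring
      rw [Finset.sum_congr rfl fun j _ => hfj j, Finset.sum_sub_distrib]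
      have h2 : ∑ j, conj (coef * c) * ((m.factorial : ℕ) : ℂ) * eval w (pderiv j (f j)) = 0 := by
        rw [← Finset.mul_sum]
        have : ∑ j, eval w (pderiv j (f j)) = 0 := by
          rw [← map_sum, hdiv, map_zero]
        rw [this, mul_zero]
      rw [h2, sub_zero]
      refine Finset.sum_congr rfl fun j _ => ?_
      rw [map_mul]
      rw [show conj (coef * ratio) * conj (ζ j) * (((m + 1).factorial : ℕ) : ℂ) * eval w (f j)
          = conj (coef * ratio) * (((m + 1).factorial : ℕ) : ℂ) * (eval w (f j) * conj (ζ j))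
          from by ring, key, one_mul]
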